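/- Let H be a planar graph containing no removable cycle of length at most 10, and let K be a 4-clique in H. Then every simple cycle of length 5 in H is edge-disjoint from K. -/

import Mathlib

open SimpleGraph

/-- `H` is a minor of `G` (branch-set definition). -/
def SimpleGraph.HasMinor {V : Type*} {W : Type*} (G : SimpleGraph V) (H : SimpleGraph W) : Prop :=
  ∃ B : W → Set V,
    (∀ w, (B w).Nonempty) ∧
    (∀ w, (G.induce (B w)).Connected) ∧
    (Pairwise fun w₁ w₂ => Disjoint (B w₁) (B w₂)) ∧
    (∀ w₁ w₂, H.Adj w₁ w₂ → ∃ v₁ ∈ B w₁, ∃ v₂ ∈ B w₂, G.Adj v₁ v₂)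

/-- Planarity via Wagner's theorem: no `K₅` minor and no `K₃,₃` minor. -/
def SimpleGraph.IsPlanar {V : Type*} (G : SimpleGraph V) : Prop :=
  ¬ G.HasMinor (completeGraph (Fin 5)) ∧
  ¬ G.HasMinor (completeBipartiteGraph (Fin 3) (Fin 3))

/-- The induced subgraph on `S` is (isomorphic to) a complete graph. -/
def SimpleGraph.InducedComplete {V : Type*} (G : SimpleGraph V) (S : Set V) : Prop :=
  ∀ x ∈ S, ∀ y ∈ S, x ≠ y → G.Adj x y

/-- The induced subgraph on `S` is isomorphic to a cycle graph of odd length. -/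
def SimpleGraph.InducedOddCycle {V : Type*} (G : SimpleGraph V) (S : Set V) : Prop :=
  ∃ n : ℕ, Odd n ∧ Nonempty ((G.induce S) ≃g cycleGraph n)

/-- A simple cycle `c` in `G` is removable if the induced graph on its vertex set is
neither isomorphic to a complete graph nor to a cycle graph of odd length. -/
def SimpleGraph.Walk.IsRemovable {V : Type*} {G : SimpleGraph V} {v : V}
    (c : G.Walk v v) : Prop :=
  ¬ G.InducedComplete {x | x ∈ c.support} ∧ ¬ G.InducedOddCycle {x | x ∈ c.support}

set_option maxHeartbeats 1600000

lemma hasMinorK5 {V : Type*} (G : SimpleGraph V) (u : Fin 5 → V)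
    (hinj : Function.Injective u) (hadj : ∀ i j, i ≠ j → G.Adj (u i) (u j)) :
    G.HasMinor (completeGraph (Fin 5)) := by
  refine ⟨fun i => {u i}, fun i => ⟨u i, rfl⟩, fun i => ?_, fun i j hij => by
    simpa using hinj.ne hij, fun i j hij => ⟨u i, rfl, u j, rfl, hadj i j hij⟩⟩
  · rw [connected_iff]
    exact ⟨fun a b => Subsingleton.elim a b ▸ Reachable.refl a, ⟨⟨u i, rfl⟩⟩⟩

lemma hasMinorK5_of_list {V : Type*} (G : SimpleGraph V) (l : List V) (hl : l.Nodup)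
    (hlen : l.length = 5) (hadj : ∀ x ∈ l, ∀ y ∈ l, x ≠ y → G.Adj x y) :
    G.HasMinor (completeGraph (Fin 5)) := by
  have hinj : Function.Injective (fun i : Fin 5 => l.get (Fin.cast hlen.symm i)) := by
    intro i j h
    have := (List.Nodup.get_inj_iff hl).mp h
    exact Fin.ext (by simpa using congrArg Fin.val this)
  exact hasMinorK5 G _ hinj fun i j hij =>
    hadj _ (l.get_mem _) _ (l.get_mem _) (fun h => hij (hinj h))

lemma support_natCard {V : Type*} [DecidableEq V] {G : SimpleGraph V} {a : V}
    (c : G.Walk a a) (hc : c.IsCycle) :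
    Nat.card {x | x ∈ c.support} = c.length := by
  cases c with
  | nil => exact absurd rfl hc.ne_nil
  | cons h q =>
    have hnd : q.support.Nodup := by
      have := ((Walk.isCycle_def _).mp hc).2.2
      simpa using this
    have hset : {x | x ∈ (Walk.cons h q).support} = ↑q.support.toFinset := by
      ext v
      simp only [Walk.support_cons, List.mem_cons, Set.mem_setOf_eq, Finset.coe_sort_coe,
        List.coe_toFinset, Set.mem_setOf_eq]
      constructor
      · rintro (rfl | hv)
        · exact q.end_mem_support
        · exact hv
      · exact Or.inr
    rw [hset, Nat.card_coe_set_eq, Set.ncard_coe_finset,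
      List.toFinset_card_of_nodup hnd]
    simpa using congrArg (· - 1) (q.length_support)

lemma cg5_no_triangle : ∀ p q r : Fin 5, (cycleGraph 5).Adj p q → (cycleGraph 5).Adj p r →
    (cycleGraph 5).Adj q r → False := by decide

lemma cg5_succ : ∀ p q : Fin 5, (cycleGraph 5).Adj p q → q = p + 1 ∨ q = p + 4 := by decide

lemma cg5_step : ∀ (p d i : Fin 5), (d = 1 ∨ d = 4) →
    (cycleGraph 5).Adj (p + d * i) (p + d * (i + 1)) := by decide

lemma cg5_inj : ∀ (p d : Fin 5), (d = 1 ∨ d = 4) →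
    ∀ i j : Fin 5, p + d * i = p + d * j → i = j := by decide

/-- In a planar graph with no removable cycle of length at most 10, every simple cycle of
length 5 is edge-disjoint from every 4-clique. -/
theorem five_cycle_clique_edge_disjoint {V : Type*} [DecidableEq V] (H : SimpleGraph V)
    (hpl : H.IsPlanar)
    (hrem : ∀ (w : V) (c : H.Walk w w), c.IsCycle → c.length ≤ 10 → ¬ c.IsRemovable)
    (K : Finset V) (hK4 : K.card = 4) (hKcl : ∀ x ∈ K, ∀ y ∈ K, x ≠ y → H.Adj x y)
    {a : V} (c : H.Walk a a) (hc : c.IsCycle) (hlen : c.length = 5) :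
    ∀ x ∈ K, ∀ y ∈ K, s(x, y) ∉ c.edges := by
  intro x hxK y hyK hmem
  have hxy : H.Adj x y := c.adj_of_mem_edges hmem
  have hxyne : x ≠ y := hxy.ne
  have hxS : x ∈ c.support := Walk.fst_mem_support_of_mem_edges c hmem
  have hyS : y ∈ c.support := Walk.snd_mem_support_of_mem_edges c hmem
  -- get z ∈ K distinct from x, y
  obtain ⟨z, hz⟩ : ((K.erase x).erase y).Nonempty := by
    rw [← Finset.card_pos, Finset.card_erase_of_mem
      (Finset.mem_erase.mpr ⟨hxyne.symm, hyK⟩), Finset.card_erase_of_mem hxK, hK4]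
    norm_num
  rw [Finset.mem_erase, Finset.mem_erase] at hz
  obtain ⟨hzy, hzx, hzK⟩ := hz
  have hxz : H.Adj x z := hKcl x hxK z hzK (Ne.symm hzx)
  have hzy' : H.Adj z y := hKcl z hzK y hyK hzy
  -- the 5-cycle is not removable
  have h5 := hrem a c hc (by omega)
  rw [Walk.IsRemovable, not_and_or, not_not, not_not] at h5
  set S : Set V := {v | v ∈ c.support} with hS
  rcases h5 with hcomp | hodd
  · -- complete on 5 vertices : K5 minor
    refine hpl.1 (hasMinorK5_of_list H c.support.tail ?_ ?_ ?_)
    · exact ((Walk.isCycle_def _).mp hc).2.2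
    · have := c.length_support
      simp only [List.length_tail, this, hlen]
    · intro u hu v hv huv
      exact hcomp u (List.mem_of_mem_tail hu) v (List.mem_of_mem_tail hv) huv
  · obtain ⟨n, hoddn, ⟨g⟩⟩ := hodd
    have hn : n = 5 := by
      have h1 : Nat.card S = 5 := by rw [hS, support_natCard c hc, hlen]
      have h2 : Nat.card S = n := by
        rw [Nat.card_congr g.toEquiv, Nat.card_eq_fintype_card, Fintype.card_fin]
      omega
    subst hn
    set x' : S := ⟨x, hxS⟩
    set y' : S := ⟨y, hyS⟩
    have hadjind : (H.induce S).Adj x' y' := by simpa using hxy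
    have hgadj : (cycleGraph 5).Adj (g x') (g y') := g.map_rel_iff.mpr hadjind
    -- z is not on the cycle
    have hzS : z ∉ S := by
      intro hzS
      set z' : S := ⟨z, hzS⟩
      have h1 : (cycleGraph 5).Adj (g x') (g z') := g.map_rel_iff.mpr (by simpa using hxz)
      have h2 : (cycleGraph 5).Adj (g y') (g z') := g.map_rel_iff.mpr (by simpa using hzy'.symm)
      exact cg5_no_triangle _ _ _ hgadj h1 h2
    obtain ⟨d, hd, hgy⟩ : ∃ d : Fin 5, (d = 1 ∨ d = 4) ∧ g y' = g x' + d := by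
      rcases cg5_succ _ _ hgadj with h | h
      · exact ⟨1, Or.inl rfl, h⟩
      · exact ⟨4, Or.inr rfl, h⟩
    set v : Fin 5 → S := fun i => g.symm (g x' + d * i) with hv
    have hv0 : v 0 = x' := by simp [hv]
    have hv1 : v 1 = y' := by simp [hv, ← hgy]
    have hvinj : Function.Injective v := by
      intro i j h
      exact cg5_inj (g x') d hd i j (g.symm.injective h)
    have hadjv : ∀ i : Fin 5, H.Adj (v i).1 (v (i + 1)).1 := by
      intro i
      have h1 : (cycleGraph 5).Adj (g x' + d * i) (g x' + d * (i + 1)) := cg5_step _ _ _ hd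
      have h2 := g.symm.map_rel_iff.mpr h1
      simpa [hv] using h2
    have hvne : ∀ i j : Fin 5, i ≠ j → (v i).1 ≠ (v j).1 := by
      intro i j hij h
      exact hij (hvinj (Subtype.ext h))
    have hzv : ∀ i : Fin 5, z ≠ (v i).1 := by
      intro i h
      exact hzS (h ▸ (v i).2)
    -- the detoured 6-cycle
    have hA0 : H.Adj (v 0).1 z := by rw [hv0]; exact hxz
    have hA1 : H.Adj z (v 1).1 := by rw [hv1]; exact hzy'
    have hA40 : H.Adj (v 4).1 (v 0).1 := hadjv 4
    set p : H.Walk z (v 0).1 :=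
      Walk.cons hA1 (Walk.cons (hadjv 1) (Walk.cons (hadjv 2)
        (Walk.cons (hadjv 3) (Walk.cons hA40 Walk.nil)))) with hp
    set w : H.Walk (v 0).1 (v 0).1 := Walk.cons hA0 p with hw
    have hwcyc : w.IsCycle := by
      rw [hw, Walk.cons_isCycle_iff]
      constructor
      · rw [Walk.isPath_def, hp]
        simp only [Walk.support_cons, Walk.support_nil, List.nodup_cons, List.mem_cons,
          List.mem_singleton, List.not_mem_nil, or_false, List.nodup_nil, and_true, not_or]
        exact ⟨⟨hzv _, hzv _, hzv _, hzv _, hzv _⟩,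
          ⟨hvne _ _ (by decide), hvne _ _ (by decide), hvne _ _ (by decide), hvne _ _ (by decide)⟩,
          ⟨hvne _ _ (by decide), hvne _ _ (by decide), hvne _ _ (by decide)⟩,
          ⟨hvne _ _ (by decide), hvne _ _ (by decide)⟩, hvne _ _ (by decide), not_false⟩
      · rw [hp]
        intro hmem'
        simp only [Walk.edges_cons, Walk.edges_nil, List.mem_cons, List.not_mem_nil, or_false,
          Sym2.eq_iff] at hmem'
        rcases hmem' with (⟨h,-⟩|⟨h,-⟩)|(⟨h,-⟩|⟨h,-⟩)|(⟨h,-⟩|⟨h,-⟩)|(⟨h,-⟩|⟨h,-⟩)|⟨h,-⟩|⟨-,h⟩ <;>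
          first
          | exact hzv _ h
          | exact hzv _ h.symm
          | exact hvne _ _ (by decide) h
    have hwlen : w.length = 6 := by simp [hw, hp]
    have h6 := hrem _ w hwcyc (by omega)
    rw [Walk.IsRemovable, not_and_or, not_not, not_not] at h6
    have hsupp : ∀ u : V, u ∈ w.support ↔
        (u = (v 0).1 ∨ u = z ∨ u = (v 1).1 ∨ u = (v 2).1 ∨ u = (v 3).1 ∨ u = (v 4).1) := by
      intro u
      simp [hw, hp]
      tauto
    rcases h6 with hcomp | hodd
    · refine hpl.1 (hasMinorK5_of_list H [(v 0).1, z, (v 1).1, (v 2).1, (v 3).1] ?_ rfl ?_)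
      · simp only [List.nodup_cons, List.mem_cons, List.mem_singleton, List.not_mem_nil,
          or_false, List.nodup_nil, and_true, not_or]
        exact ⟨⟨Ne.symm (hzv 0), hvne _ _ (by decide), hvne _ _ (by decide), hvne _ _ (by decide)⟩,
          ⟨hzv _, hzv _, hzv _⟩, ⟨hvne _ _ (by decide), hvne _ _ (by decide)⟩,
          hvne _ _ (by decide), not_false⟩
      · intro u hu t ht hut
        refine hcomp u ?_ t ?_ hut <;>
          · simp only [List.mem_cons, List.not_mem_nil, or_false] at hu ht
            rw [Set.mem_setOf_eq, hsupp]
            tauto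
    · obtain ⟨n, hoddn, ⟨g'⟩⟩ := hodd
      have h1 : Nat.card {u | u ∈ w.support} = 6 := by rw [support_natCard w hwcyc, hwlen]
      have h2 : Nat.card {u | u ∈ w.support} = n := by
        rw [Nat.card_congr g'.toEquiv, Nat.card_eq_fintype_card, Fintype.card_fin]
      have hn6 : n = 6 := by rw [← h2, h1]
      rw [hn6] at hoddn
      exact (by decide : ¬ Odd 6) hoddn
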